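/- Let L be the Laplacian of a connected weighted graph, T a subset of edges with edge-vertex incidence matrix B_T and diagonal weight matrix W_T, and 0 < θ < 1. Assume L - (1-θ)B_TᵀW_T B_T is the Laplacian of a connected graph. Then (L - (1-θ)B_TᵀW_T B_T)† = L† + (1-θ)·L†B_Tᵀ W_T^{1/2} (I - (1-θ)W_T^{1/2}B_T L† B_Tᵀ W_T^{1/2})⁻¹ W_T^{1/2} B_T L†. -/

import Mathlib

open Matrix

/-- Uniqueness of the Moore-Penrose pseudoinverse. -/
theorem mp_uniq {m : Type*} [Fintype m] (A X Y : Matrix m m ℝ)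
    (h1 : A * X * A = A) (h2 : X * A * X = X) (h3 : (A * X)ᵀ = A * X) (h4 : (X * A)ᵀ = X * A)
    (g1 : A * Y * A = A) (g2 : Y * A * Y = Y) (g3 : (A * Y)ᵀ = A * Y) (g4 : (Y * A)ᵀ = Y * A) :
    X = Y := by
  have hax : A * X = A * Y := by
    calc A * X = (A * X)ᵀ := h3.symm
    _ = Xᵀ * Aᵀ := by rw [transpose_mul]
    _ = Xᵀ * (A * Y * A)ᵀ := by rw [g1]
    _ = Xᵀ * (Aᵀ * Yᵀ * Aᵀ) := by rw [transpose_mul, transpose_mul]; noncomm_ring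
    _ = (Xᵀ * Aᵀ) * (Yᵀ * Aᵀ) := by noncomm_ring
    _ = (A * X)ᵀ * (A * Y)ᵀ := by rw [transpose_mul A X, transpose_mul A Y]
    _ = (A * X) * (A * Y) := by rw [h3, g3]
    _ = (A * X * A) * Y := by noncomm_ring
    _ = A * Y := by rw [h1]
  have hxa : X * A = Y * A := by
    calc X * A = (X * A)ᵀ := h4.symm
    _ = Aᵀ * Xᵀ := by rw [transpose_mul]
    _ = (A * Y * A)ᵀ * Xᵀ := by rw [g1]
    _ = (Aᵀ * Yᵀ * Aᵀ) * Xᵀ := by rw [transpose_mul, transpose_mul]; noncomm_ring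
    _ = (Aᵀ * Yᵀ) * (Aᵀ * Xᵀ) := by noncomm_ring
    _ = (Y * A)ᵀ * (X * A)ᵀ := by rw [transpose_mul Y A, transpose_mul X A]
    _ = (Y * A) * (X * A) := by rw [h4, g4]
    _ = Y * (A * X * A) := by noncomm_ring
    _ = Y * A := by rw [h1]
  calc X = X * A * X := h2.symm
  _ = X * (A * Y) := by rw [mul_assoc, hax]
  _ = (X * A) * Y := by noncomm_ring
  _ = Y * A * Y := by rw [hxa]
  _ = Y := g2

theorem stmt_13 (n : ℕ) (hn : 0 < n) (θ : ℝ) (hθ0 : 0 < θ) (hθ1 : θ < 1)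
    (w : Fin n → Fin n → ℝ)
    (hw_symm : ∀ u v, w u v = w v u) (hw_nonneg : ∀ u v, 0 ≤ w u v)
    (hw_diag : ∀ u, w u u = 0)
    (L Ldag : Matrix (Fin n) (Fin n) ℝ)
    (hL : L = Matrix.of fun u v => if u = v then ∑ x, w u x else -w u v)
    -- connectedness of G
    (hconn : ∀ x : Fin n → ℝ, L *ᵥ x = 0 → ∃ c : ℝ, ∀ i, x i = c)
    -- Ldag is the Moore–Penrose pseudoinverse of L
    (hMP1 : L * Ldag * L = L) (hMP2 : Ldag * L * Ldag = Ldag)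
    (hMP3 : (L * Ldag)ᵀ = L * Ldag) (hMP4 : (Ldag * L)ᵀ = Ldag * L)
    -- T is a set of edges of G, with incidence matrix B and weights wt
    (T : Type) [Fintype T] [DecidableEq T]
    (B : Matrix T (Fin n) ℝ) (wt : T → ℝ) (hwt : ∀ e, 0 < wt e)
    (hB : ∀ e : T, ∃ p q : Fin n, p ≠ q ∧ wt e = w p q ∧
      B e = fun i => (if i = p then (1 : ℝ) else 0) - (if i = q then 1 else 0))
    (W sqrtW : Matrix T T ℝ)
    (hW : W = Matrix.diagonal wt)
    (hsqrtW : sqrtW = Matrix.diagonal fun e => Real.sqrt (wt e))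
    -- since T ⊆ E, BᵀWB ⪯ L
    (hsub : (L - Bᵀ * W * B).PosSemidef)
    -- the Laplacian after θ-deletion of T, assumed connected, and its pseudoinverse
    (M Mdag : Matrix (Fin n) (Fin n) ℝ)
    (hM : M = L - (1 - θ) • (Bᵀ * W * B))
    (hconnM : ∀ x : Fin n → ℝ, M *ᵥ x = 0 → ∃ c : ℝ, ∀ i, x i = c)
    (hMP1' : M * Mdag * M = M) (hMP2' : Mdag * M * Mdag = Mdag)
    (hMP3' : (M * Mdag)ᵀ = M * Mdag) (hMP4' : (Mdag * M)ᵀ = Mdag * M) :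
    Mdag = Ldag + (1 - θ) • (Ldag * Bᵀ * sqrtW *
      ((1 : Matrix T T ℝ) - (1 - θ) • (sqrtW * B * Ldag * Bᵀ * sqrtW))⁻¹ *
      sqrtW * B * Ldag) := by
  set N : ℝ := 1 - θ with hNdef
  have hN0 : 0 < N := by simp only [hNdef]; linarith
  have hN1 : N < 1 := by simp only [hNdef]; linarith
  -- basic symmetry facts
  have hLsym : Lᵀ = L := by
    subst hL; ext u v
    simp only [transpose_apply, of_apply]
    rcases eq_or_ne u v with h | h
    · subst h; rfl
    · rw [if_neg h.symm, if_neg h, hw_symm]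
  have hWsym : Wᵀ = W := by rw [hW]; exact diagonal_transpose _
  have hsWsym : sqrtWᵀ = sqrtW := by rw [hsqrtW]; exact diagonal_transpose _
  have hWsq : sqrtW * sqrtW = W := by
    have h : (fun e => Real.sqrt (wt e) * Real.sqrt (wt e)) = wt :=
      funext fun e => Real.mul_self_sqrt (hwt e).le
    rw [hsqrtW, hW, diagonal_mul_diagonal, h]
  have hGsym : (Bᵀ * W * B)ᵀ = Bᵀ * W * B := by
    rw [transpose_mul, transpose_mul, transpose_transpose, hWsym, Matrix.mul_assoc]
  have hMsym : Mᵀ = M := by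
    rw [hM, transpose_sub, transpose_smul, hGsym, hLsym]
  -- Ldag is symmetric
  have hLdsym : Ldagᵀ = Ldag := by
    have e1 : L * Ldagᵀ = Ldag * L := by
      have h : (Ldag * Lᵀ)ᵀ = L * Ldagᵀ := by rw [transpose_mul, transpose_transpose]
      rw [← h, hLsym, hMP4]
    have e2 : Ldagᵀ * L = L * Ldag := by
      have h : (Lᵀ * Ldag)ᵀ = Ldagᵀ * L := by rw [transpose_mul, transpose_transpose]
      rw [← h, hLsym, hMP3]
    refine mp_uniq L Ldagᵀ Ldag ?_ ?_ ?_ ?_ hMP1 hMP2 hMP3 hMP4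
    · have h := congrArg Matrix.transpose hMP1
      rw [transpose_mul, transpose_mul, hLsym, ← Matrix.mul_assoc] at h
      exact h
    · have h := congrArg Matrix.transpose hMP2
      rw [transpose_mul, transpose_mul, hLsym, ← Matrix.mul_assoc] at h
      exact h
    · rw [e1, hMP4]
    · rw [e2, hMP3]
  have hcomm : L * Ldag = Ldag * L := by
    calc L * Ldag = Lᵀ * Ldagᵀ := by rw [hLsym, hLdsym]
    _ = (Ldag * L)ᵀ := (transpose_mul _ _).symm
    _ = Ldag * L := hMP4
  -- the projection L * Ldag acts as identity on vectors with zero coordinate sum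
  have hPv : ∀ x : Fin n → ℝ, (∑ i, x i) = 0 → (L * Ldag) *ᵥ x = x := by
    intro x hx
    set Q : Matrix (Fin n) (Fin n) ℝ := 1 - Ldag * L with hQ
    have hLQ : L * Q = 0 := by
      rw [hQ, mul_sub, mul_one, ← Matrix.mul_assoc, hMP1, sub_self]
    have hQsym : Qᵀ = Q := by rw [hQ, transpose_sub, transpose_one, hMP4]
    have hcol : ∀ j i i', Q i j = Q i' j := by
      intro j
      have hker : L *ᵥ (fun i => Q i j) = 0 := by
        ext i
        have h0 : (L * Q) i j = 0 := by rw [hLQ]; rfl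
        simpa [Matrix.mul_apply, mulVec, dotProduct] using h0
      obtain ⟨c, hc⟩ := hconn (fun i => Q i j) hker
      intro i i'
      rw [hc i, hc i']
    have i0 : Fin n := ⟨0, hn⟩
    have hsymQ : ∀ i j, Q i j = Q j i := by
      intro i j
      have := congrFun (congrFun hQsym i) j
      simpa [transpose_apply] using this.symm
    have hconst : ∀ i j, Q i j = Q i0 i0 := by
      intro i j
      calc Q i j = Q i0 j := hcol j i i0
      _ = Q j i0 := hsymQ i0 j
      _ = Q i0 i0 := hcol i0 j i0
    have hQx : Q *ᵥ x = 0 := by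
      ext i
      simp only [mulVec, dotProduct, Pi.zero_apply]
      calc ∑ k, Q i k * x k = ∑ k, Q i0 i0 * x k := by
            refine Finset.sum_congr rfl fun k _ => ?_
            rw [hconst i k]
      _ = Q i0 i0 * ∑ k, x k := by rw [Finset.mul_sum]
      _ = 0 := by rw [hx, mul_zero]
    have h2 : (Ldag * L) *ᵥ x = x := by
      have := hQx
      rw [hQ, sub_mulVec, one_mulVec, sub_eq_zero] at this
      exact this.symm
    rw [hcomm]; exact h2
  -- matrix version
  have hPmat : ∀ {k : Type} [Fintype k] (A : Matrix (Fin n) k ℝ),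
      (∀ j, (∑ i, A i j) = 0) → L * Ldag * A = A := by
    intro k _ A hA
    ext i j
    have h := congrFun (hPv (fun i => A i j) (hA j)) i
    simpa [Matrix.mul_apply, mulVec, dotProduct] using h
  have hcolB : ∀ e, (∑ i, B e i) = 0 := by
    intro e
    obtain ⟨p, q, hpq, -, hBe⟩ := hB e
    rw [hBe]
    simp [Finset.sum_sub_distrib, Finset.sum_ite_eq']
  have hPB : L * Ldag * Bᵀ = Bᵀ := by
    refine hPmat _ fun e => ?_
    simpa [transpose_apply] using hcolB e
  -- an adjoint-moving fact for dot products
  have hadj : ∀ {a b : Type} [Fintype a] [Fintype b] (P : Matrix a b ℝ)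
      (u : b → ℝ) (v : a → ℝ), (P *ᵥ u) ⬝ᵥ v = u ⬝ᵥ (Pᵀ *ᵥ v) := by
    intro a b _ _ P u v
    rw [mulVec_transpose, dotProduct_comm, dotProduct_mulVec, dotProduct_comm]
  have hadj2 : ∀ {a b : Type} [Fintype a] [Fintype b] (P : Matrix a b ℝ)
      (u : a → ℝ) (v : b → ℝ), u ⬝ᵥ (P *ᵥ v) = (Pᵀ *ᵥ u) ⬝ᵥ v := by
    intro a b _ _ P u v
    rw [hadj, transpose_transpose]
  -- the matrix S is positive definite, hence invertible
  set A : Matrix T T ℝ := sqrtW * B * Ldag * Bᵀ * sqrtW with hA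
  set S : Matrix T T ℝ := (1 : Matrix T T ℝ) - N • A with hS
  have hAsym : Aᵀ = A := by
    rw [hA]
    simp only [transpose_mul, transpose_transpose, hsWsym, hLdsym, Matrix.mul_assoc]
  have hSsym : Sᵀ = S := by
    rw [hS, transpose_sub, transpose_one, transpose_smul, hAsym]
  have hSpd : S.PosDef := by
    refine PosDef.of_dotProduct_mulVec_pos ?_ ?_
    · rw [IsHermitian, conjTranspose_eq_transpose_of_trivial, hSsym]
    · intro y hy
      have hsy : star y = y := by simp
      set x : Fin n → ℝ := Bᵀ *ᵥ (sqrtW *ᵥ y) with hx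
      set z : Fin n → ℝ := Ldag *ᵥ x with hz
      set u : T → ℝ := sqrtW *ᵥ (B *ᵥ z) with hu
      set q : ℝ := x ⬝ᵥ z with hq
      have hxsum : (∑ i, x i) = 0 := by
        rw [hx]
        simp only [mulVec, dotProduct, transpose_apply]
        rw [Finset.sum_comm]
        refine Finset.sum_eq_zero fun e _ => ?_
        rw [← Finset.sum_mul, hcolB e, zero_mul]
      have hLz : L *ᵥ z = x := by
        rw [hz, mulVec_mulVec, hPv x hxsum]
      have hAy : A *ᵥ y = sqrtW *ᵥ (B *ᵥ z) := by
        rw [hA, hz, hx]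
        simp only [← mulVec_mulVec]
      have hAyq : y ⬝ᵥ (A *ᵥ y) = q := by
        rw [hAy, hadj2, hsWsym, hadj2, ← hx, ← hq]
      have hqyu : q = y ⬝ᵥ u := by rw [← hAyq, hu, hAy]
      have huuq : u ⬝ᵥ u ≤ q := by
        have h0 := hsub.dotProduct_mulVec_nonneg z
        rw [star_trivial, sub_mulVec, dotProduct_sub] at h0
        have hzLz : z ⬝ᵥ (L *ᵥ z) = q := by
          rw [hLz, dotProduct_comm, hq]
        have hzGz : z ⬝ᵥ ((Bᵀ * W * B) *ᵥ z) = u ⬝ᵥ u := by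
          rw [← hWsq]
          simp only [← mulVec_mulVec]
          rw [hadj2, transpose_transpose, hadj2, hsWsym, ← hu]
        rw [hzLz, hzGz] at h0
        linarith
      have hyy : 0 < y ⬝ᵥ y := by
        have h1 : y ⬝ᵥ y ≠ 0 := fun h => hy (dotProduct_self_eq_zero.mp h)
        have h2 : 0 ≤ y ⬝ᵥ y := Finset.sum_nonneg fun i _ => mul_self_nonneg _
        exact lt_of_le_of_ne h2 (Ne.symm h1)
      have hCS : q ^ 2 ≤ (y ⬝ᵥ y) * (u ⬝ᵥ u) := by
        have := Finset.sum_mul_sq_le_sq_mul_sq Finset.univ y u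
        rw [hqyu]
        simp only [dotProduct]
        calc (∑ i, y i * u i) ^ 2 ≤ (∑ i, y i ^ 2) * (∑ i, u i ^ 2) := this
        _ = (∑ i, y i * y i) * (∑ i, u i * u i) := by simp only [sq]
      have hqle : q ≤ y ⬝ᵥ y := by
        rcases le_or_gt q 0 with h | h
        · linarith
        · have h1 : q ^ 2 ≤ (y ⬝ᵥ y) * q :=
            le_trans hCS (mul_le_mul_of_nonneg_left huuq hyy.le)
          rw [sq] at h1
          exact le_of_mul_le_mul_right h1 h
      have hgoal : 0 < y ⬝ᵥ y - N * q := by nlinarith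
      rw [hsy, hS, sub_mulVec, one_mulVec, smul_mulVec, dotProduct_sub,
        dotProduct_smul, hAyq]
      simpa using hgoal
  have hSunit : IsUnit S.det := (Matrix.isUnit_iff_isUnit_det S).mp hSpd.isUnit
  have hS1 : S * S⁻¹ = 1 := Matrix.mul_nonsing_inv S hSunit
  have hSinvsym : (S⁻¹)ᵀ = S⁻¹ := by rw [Matrix.transpose_nonsing_inv, hSsym]
  -- the candidate pseudoinverse
  set Y : Matrix (Fin n) (Fin n) ℝ :=
    Ldag + N • (Ldag * Bᵀ * sqrtW * S⁻¹ * sqrtW * B * Ldag) with hY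
  show Mdag = Y
  have hYsym : Yᵀ = Y := by
    rw [hY]
    simp only [transpose_add, transpose_smul, transpose_mul, transpose_transpose,
      hLdsym, hsWsym, hSinvsym, Matrix.mul_assoc]
  -- key computation : M * (Ldag * Bᵀ * sqrtW) = (Bᵀ * sqrtW) * S
  have hMZt : M * (Ldag * Bᵀ * sqrtW) = (Bᵀ * sqrtW) * S := by
    have e1 : L * (Ldag * Bᵀ * sqrtW) = Bᵀ * sqrtW := by
      calc L * (Ldag * Bᵀ * sqrtW) = (L * Ldag * Bᵀ) * sqrtW := by
            simp only [Matrix.mul_assoc]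
      _ = Bᵀ * sqrtW := by rw [hPB]
    have e2 : (Bᵀ * W * B) * (Ldag * Bᵀ * sqrtW) = (Bᵀ * sqrtW) * A := by
      rw [hA, ← hWsq]; simp only [Matrix.mul_assoc]
    rw [hM, Matrix.sub_mul, Matrix.smul_mul, e1, e2, hS, Matrix.mul_sub, Matrix.mul_one, Matrix.mul_smul]
  have hGLd : (Bᵀ * W * B) * Ldag = (Bᵀ * sqrtW) * (sqrtW * B * Ldag) := by
    rw [← hWsq]; simp only [Matrix.mul_assoc]
  have hMY : M * Y = L * Ldag := by
    have hgroup : Ldag * Bᵀ * sqrtW * S⁻¹ * sqrtW * B * Ldag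
        = (Ldag * Bᵀ * sqrtW) * (S⁻¹ * (sqrtW * B * Ldag)) := by
      simp only [Matrix.mul_assoc]
    have step : M * (Ldag * Bᵀ * sqrtW * S⁻¹ * sqrtW * B * Ldag)
        = (Bᵀ * sqrtW) * (sqrtW * B * Ldag) := by
      rw [hgroup, ← Matrix.mul_assoc, hMZt, Matrix.mul_assoc, ← Matrix.mul_assoc S, hS1,
        Matrix.one_mul]
    rw [hY, mul_add, Matrix.mul_smul, step, hM, Matrix.sub_mul, Matrix.smul_mul, hGLd]
    abel
  have hYM : Y * M = L * Ldag := by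
    have h : (Y * M)ᵀ = L * Ldag := by
      rw [transpose_mul, hMsym, hYsym, hMY]
    calc Y * M = ((Y * M)ᵀ)ᵀ := (transpose_transpose _).symm
    _ = (L * Ldag)ᵀ := by rw [h]
    _ = L * Ldag := hMP3
  have hPM : L * Ldag * M = M := by
    have e : L * Ldag * (Bᵀ * W * B) = Bᵀ * W * B := by
      calc L * Ldag * (Bᵀ * W * B) = (L * Ldag * Bᵀ) * (W * B) := by
            simp only [Matrix.mul_assoc]
      _ = Bᵀ * (W * B) := by rw [hPB]
      _ = Bᵀ * W * B := by rw [Matrix.mul_assoc]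
    rw [hM, mul_sub, Matrix.mul_smul, hMP1, e]
  have hPY : L * Ldag * Y = Y := by
    have e : L * Ldag * (Ldag * Bᵀ * sqrtW * S⁻¹ * sqrtW * B * Ldag)
        = Ldag * Bᵀ * sqrtW * S⁻¹ * sqrtW * B * Ldag := by
      calc L * Ldag * (Ldag * Bᵀ * sqrtW * S⁻¹ * sqrtW * B * Ldag)
          = (L * Ldag * Ldag) * (Bᵀ * (sqrtW * (S⁻¹ * (sqrtW * (B * Ldag))))) := by
            simp only [Matrix.mul_assoc]
      _ = Ldag * (Bᵀ * (sqrtW * (S⁻¹ * (sqrtW * (B * Ldag))))) := by rw [hcomm, hMP2]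
      _ = Ldag * Bᵀ * sqrtW * S⁻¹ * sqrtW * B * Ldag := by simp only [Matrix.mul_assoc]
    have e2 : L * Ldag * Ldag = Ldag := by rw [hcomm, hMP2]
    rw [hY, mul_add, Matrix.mul_smul, e, e2]
  refine mp_uniq M Mdag Y hMP1' hMP2' hMP3' hMP4' ?_ ?_ ?_ ?_
  · rw [hMY, hPM]
  · rw [hYM, hPY]
  · rw [hMY]; exact hMP3
  · rw [hYM]; exact hMP3
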